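/- If a discrete distribution (p_k)_{k \geq 0} on nonnegative integers with p_0 > 0 is infinitely divisible, then the logarithmic derivative of its generating function P(z) = \sum_k p_k z^k has all nonnegative Taylor coefficients at 0: P'(z)/P(z) = \sum_{k \geq 0} r_k z^k with r_k \geq 0 for all k, for z \in [0,1). -/

import Mathlib

/-- Convolution of two sequences indexed by `ℕ`. -/
def seqConv (a b : ℕ → ℝ) : ℕ → ℝ :=
  fun k => ∑ i ∈ Finset.range (k + 1), a i * b (k - i)

/-- `n`-fold convolution power of a sequence. -/
def seqConvPow (q : ℕ → ℝ) : ℕ → (ℕ → ℝ)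
  | 0 => fun k => if k = 0 then 1 else 0
  | n + 1 => seqConv (seqConvPow q n) q

open PowerSeries Finset

/-- The sequence of Taylor coefficients of `P'/P`, defined by recursion. -/
noncomputable def rseq (p : ℕ → ℝ) : ℕ → ℝ
  | k => ((k + 1) * p (k + 1) - ∑ i ∈ (Finset.range k).attach,
      rseq p i.1 * p (k - i.1)) / p 0
  decreasing_by exact Finset.mem_range.mp i.2

lemma rseq_spec (p : ℕ → ℝ) (hp0 : p 0 ≠ 0) (k : ℕ) :
    ∑ i ∈ Finset.range (k + 1), rseq p i * p (k - i) = (k + 1) * p (k + 1) := by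
  rw [Finset.sum_range_succ]
  have h : rseq p k = ((k + 1) * p (k + 1) - ∑ i ∈ (Finset.range k).attach,
      rseq p i.1 * p (k - i.1)) / p 0 := by rw [rseq]
  rw [h, Finset.sum_attach (Finset.range k) (fun i => rseq p i * p (k - i))]
  field_simp
  simp only [Nat.sub_self]
  ring

lemma mk_seqConv (a b : ℕ → ℝ) :
    PowerSeries.mk (seqConv a b) = PowerSeries.mk a * PowerSeries.mk b := by
  ext k
  rw [coeff_mk, PowerSeries.coeff_mul, Finset.Nat.sum_antidiagonal_eq_sum_range_succ_mk]
  simp [seqConv, coeff_mk]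

lemma mk_seqConvPow (q : ℕ → ℝ) (n : ℕ) :
    PowerSeries.mk (seqConvPow q n) = (PowerSeries.mk q) ^ n := by
  induction n with
  | zero =>
    ext k
    simp [seqConvPow, coeff_mk, PowerSeries.coeff_one]
  | succ n ih =>
    show PowerSeries.mk (seqConv (seqConvPow q n) q) = _
    rw [mk_seqConv, ih, pow_succ]

lemma mk_rseq_mul (p : ℕ → ℝ) (hp0 : p 0 ≠ 0) :
    PowerSeries.mk (rseq p) * PowerSeries.mk p = d⁄dX ℝ (PowerSeries.mk p) := by
  ext k
  rw [PowerSeries.coeff_mul, Finset.Nat.sum_antidiagonal_eq_sum_range_succ_mk,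
    PowerSeries.coeff_derivative]
  simp only [coeff_mk]
  rw [rseq_spec p hp0 k]
  ring

lemma seqConvPow_zero_coeff (q : ℕ → ℝ) (n : ℕ) : seqConvPow q n 0 = q 0 ^ n := by
  induction n with
  | zero => simp [seqConvPow]
  | succ n ih =>
    show seqConv (seqConvPow q n) q 0 = _
    simp [seqConv, ih, pow_succ]

lemma seqConvPow_nonneg (q : ℕ → ℝ) (hq : ∀ k, 0 ≤ q k) (n k : ℕ) :
    0 ≤ seqConvPow q n k := by
  induction n generalizing k with
  | zero => dsimp [seqConvPow]; split <;> norm_num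
  | succ n ih =>
    show 0 ≤ seqConv (seqConvPow q n) q k
    exact Finset.sum_nonneg fun i _ => mul_nonneg (ih i) (hq _)

lemma seqConvPow_ge (q : ℕ → ℝ) (hq : ∀ k, 0 ≤ q k) (n : ℕ) (hn : 1 ≤ n)
    (j : ℕ) (hj : 1 ≤ j) :
    (n : ℝ) * q j * q 0 ^ (n - 1) ≤ seqConvPow q n j := by
  induction n with
  | zero => omega
  | succ n ih =>
    show _ ≤ seqConv (seqConvPow q n) q j
    rcases Nat.eq_zero_or_pos n with rfl | hn'
    · show _ ≤ ∑ i ∈ Finset.range (j + 1), seqConvPow q 0 i * q (j - i)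
      have : ∀ i ∈ Finset.range (j + 1), seqConvPow q 0 i * q (j - i)
          = if i = 0 then q j else 0 := by
        intro i _
        dsimp [seqConvPow]
        split <;> simp_all
      rw [Finset.sum_congr rfl this, Finset.sum_ite_eq' (Finset.range (j+1)) 0 (fun _ => q j)]
      simp
    · have ih' := ih hn'
      have h2 : ({0, j} : Finset ℕ) ⊆ Finset.range (j + 1) := by
        intro x hx
        simp only [Finset.mem_insert, Finset.mem_singleton] at hx
        rcases hx with rfl | rfl <;> simp [Nat.lt_succ_iff]
      have hsub : ∑ i ∈ ({0, j} : Finset ℕ), seqConvPow q n i * q (j - i)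
          ≤ seqConv (seqConvPow q n) q j := by
        apply Finset.sum_le_sum_of_subset_of_nonneg h2
        intro i _ _
        exact mul_nonneg (seqConvPow_nonneg q hq n i) (hq _)
      have hpair : ∑ i ∈ ({0, j} : Finset ℕ), seqConvPow q n i * q (j - i)
          = q 0 ^ n * q j + seqConvPow q n j * q 0 := by
        rw [Finset.sum_pair (by omega : (0:ℕ) ≠ j)]
        rw [seqConvPow_zero_coeff, Nat.sub_self, Nat.sub_zero]
      refine le_trans ?_ hsub
      rw [hpair]
      have hmul : (n : ℝ) * q j * q 0 ^ (n - 1) * q 0 ≤ seqConvPow q n j * q 0 :=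
        mul_le_mul_of_nonneg_right ih' (hq 0)
      have hpow : q 0 ^ (n - 1) * q 0 = q 0 ^ n := by
        rw [← pow_succ]
        congr 1
        omega
      have : (n : ℝ) * q j * q 0 ^ n ≤ seqConvPow q n j * q 0 := by
        calc (n : ℝ) * q j * q 0 ^ n = (n : ℝ) * q j * q 0 ^ (n - 1) * q 0 := by
              rw [← hpow]; ring
          _ ≤ _ := hmul
      push_cast
      nlinarith [mul_nonneg (hq j) (pow_nonneg (hq 0) n)]

lemma rseq_convPow (q : ℕ → ℝ) (n : ℕ) (hn : 0 < n) (hq0 : q 0 ≠ 0) (k : ℕ) :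
    rseq (seqConvPow q n) k = (n : ℝ) * rseq q k := by
  set Q := PowerSeries.mk q with hQ
  have hQ0 : PowerSeries.constantCoeff Q ≠ 0 := by
    simpa [hQ] using hq0
  have hp0 : seqConvPow q n 0 ≠ 0 := by
    rw [seqConvPow_zero_coeff]; exact pow_ne_zero _ hq0
  have hA : PowerSeries.mk (rseq (seqConvPow q n)) * Q ^ n
      = d⁄dX ℝ (Q ^ n) := by
    rw [← mk_seqConvPow, mk_rseq_mul _ hp0]
  have hB : PowerSeries.mk (rseq q) * Q = d⁄dX ℝ Q := mk_rseq_mul q hq0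
  have key : PowerSeries.mk (rseq (seqConvPow q n))
      = (n : ℝ⟦X⟧) * PowerSeries.mk (rseq q) := by
    have hQn : Q ^ n ≠ 0 := pow_ne_zero _ (fun h => hQ0 (by rw [h, map_zero]))
    apply mul_right_cancel₀ hQn
    rw [hA, Derivation.leibniz_pow]
    obtain ⟨m, rfl⟩ : ∃ m, n = m + 1 := ⟨n - 1, (Nat.succ_pred_eq_of_pos hn).symm⟩
    rw [smul_eq_mul, nsmul_eq_mul, Nat.add_sub_cancel, ← hB]
    push_cast
    ring
  have hc := congrArg (fun F => PowerSeries.coeff k F) key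
  try simp only at hc
  rw [coeff_mk, ← map_natCast (PowerSeries.C (R := ℝ)) n, PowerSeries.coeff_C_mul, coeff_mk] at hc
  exact hc

lemma rseq_nonneg (p : ℕ → ℝ)
    (hnn : ∀ k, 0 ≤ p k) (hsum : ∑' k, p k = 1) (h0 : 0 < p 0)
    (hID : ∀ n : ℕ, 0 < n → ∃ q : ℕ → ℝ,
      (∀ k, 0 ≤ q k) ∧ (∑' k, q k = 1) ∧ p = seqConvPow q n) (k : ℕ) :
    0 ≤ rseq p k := by
  have hp1 : ∀ j, p j ≤ 1 := by
    intro j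
    have hsm : Summable p := by
      by_contra hns
      rw [tsum_eq_zero_of_not_summable hns] at hsum
      norm_num at hsum
    calc p j ≤ ∑' i, p i := Summable.le_tsum hsm j fun i _ => hnn i
      _ = 1 := hsum
  set S := ∑ i ∈ Finset.range k, |rseq p i| with hS
  have hSnn : 0 ≤ S := Finset.sum_nonneg fun i _ => abs_nonneg _
  have claim : ∀ n : ℕ, 0 < n → -(S / (p 0 * p 0 * n)) ≤ rseq p k := by
    intro n hn
    obtain ⟨q, hq, hqsum, hpq⟩ := hID n hn
    have hqsm : Summable q := by
      by_contra hns
      rw [tsum_eq_zero_of_not_summable hns] at hqsum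
      norm_num at hqsum
    have hq1 : ∀ j, q j ≤ 1 := by
      intro j
      calc q j ≤ ∑' i, q i := Summable.le_tsum hqsm j fun i _ => hq i
        _ = 1 := hqsum
    have hq0n : q 0 ^ n = p 0 := by rw [hpq, seqConvPow_zero_coeff]
    have hq0pos : 0 < q 0 := by
      rcases (hq 0).lt_or_eq with h | h
      · exact h
      · exfalso
        rw [← h, zero_pow hn.ne'] at hq0n
        linarith
    have hq0ge : p 0 ≤ q 0 := by
      calc p 0 = q 0 ^ n := hq0n.symm
        _ ≤ q 0 ^ 1 := pow_le_pow_of_le_one (hq 0) (hq1 0) hn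
        _ = q 0 := pow_one _
    have hqb : ∀ j, 1 ≤ j → q j ≤ 1 / ((n : ℝ) * p 0) := by
      intro j hj
      have h1 := seqConvPow_ge q hq n hn j hj
      have h2 : p 0 ≤ q 0 ^ (n - 1) := by
        calc p 0 = q 0 ^ n := hq0n.symm
          _ ≤ q 0 ^ (n - 1) := pow_le_pow_of_le_one (hq 0) (hq1 0) (Nat.sub_le n 1)
      have h3 : (n : ℝ) * q j * p 0 ≤ p j := by
        calc (n : ℝ) * q j * p 0 ≤ (n : ℝ) * q j * q 0 ^ (n - 1) :=
              mul_le_mul_of_nonneg_left h2 (mul_nonneg (Nat.cast_nonneg n) (hq j))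
          _ ≤ seqConvPow q n j := h1
          _ = p j := by rw [hpq]
      have hp1j := hp1 j
      have hnpos : (0 : ℝ) < (n : ℝ) * p 0 := by positivity
      rw [le_div_iff₀ hnpos]
      nlinarith
    have hq0ne : q 0 ≠ 0 := hq0pos.ne'
    have hr_eq : ∀ i, rseq p i = (n : ℝ) * rseq q i := by
      intro i; rw [hpq]; exact rseq_convPow q n hn hq0ne i
    have hs := rseq_spec q hq0ne k
    rw [Finset.sum_range_succ] at hs
    simp only [Nat.sub_self] at hs
    have hkey : rseq p k * q 0 =
        (n : ℝ) * ((k + 1) * q (k + 1)) - ∑ i ∈ Finset.range k, rseq p i * q (k - i) := by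
      rw [hr_eq k]
      have : ∑ i ∈ Finset.range k, rseq p i * q (k - i)
          = (n : ℝ) * ∑ i ∈ Finset.range k, rseq q i * q (k - i) := by
        rw [Finset.mul_sum]
        exact Finset.sum_congr rfl fun i _ => by rw [hr_eq i]; ring
      rw [this]
      nlinarith [hs]
    have hsum_le : ∑ i ∈ Finset.range k, rseq p i * q (k - i) ≤ S / ((n : ℝ) * p 0) := by
      have hterm : ∀ i ∈ Finset.range k,
          rseq p i * q (k - i) ≤ |rseq p i| * (1 / ((n : ℝ) * p 0)) := by
        intro i hi
        have hik : i < k := Finset.mem_range.mp hi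
        have h1k : 1 ≤ k - i := by omega
        exact mul_le_mul (le_abs_self _) (hqb _ h1k) (hq _) (abs_nonneg _)
      calc ∑ i ∈ Finset.range k, rseq p i * q (k - i)
          ≤ ∑ i ∈ Finset.range k, |rseq p i| * (1 / ((n : ℝ) * p 0)) :=
            Finset.sum_le_sum hterm
        _ = S * (1 / ((n : ℝ) * p 0)) := by rw [← Finset.sum_mul]
        _ = S / ((n : ℝ) * p 0) := by ring
    have h1 : -(S / ((n : ℝ) * p 0)) ≤ rseq p k * q 0 := by
      have hpos : 0 ≤ (n : ℝ) * ((k + 1) * q (k + 1)) :=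
        mul_nonneg (Nat.cast_nonneg n) (mul_nonneg (by positivity) (hq _))
      linarith [hkey, hsum_le]
    have h2 : -(S / ((n : ℝ) * p 0)) / q 0 ≤ rseq p k := by
      rw [div_le_iff₀ hq0pos]
      exact h1
    refine le_trans ?_ h2
    rw [neg_div, div_div, neg_le_neg_iff]
    apply div_le_div_of_nonneg_left hSnn (by positivity)
    nlinarith [mul_nonneg (mul_nonneg (Nat.cast_nonneg (α := ℝ) n) h0.le)
      (sub_nonneg.mpr hq0ge)]
  by_contra hneg
  push_neg at hneg
  set ε := -rseq p k with hε
  have hεpos : 0 < ε := by simp [hε]; linarith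
  obtain ⟨n, hn⟩ := exists_nat_gt (S / (p 0 * p 0) / ε)
  have hnpos : 0 < n := by
    by_contra h
    push_neg at h
    interval_cases n
    simp at hn
    nlinarith [div_nonneg (div_nonneg hSnn (by positivity : (0:ℝ) ≤ p 0 * p 0)) hεpos.le]
  have hc := claim n hnpos
  have h4 : ε ≤ S / (p 0 * p 0 * ↑n) := by linarith
  have h5 : ε * (p 0 * p 0 * ↑n) ≤ S := by
    rw [← le_div_iff₀ (by positivity : (0:ℝ) < p 0 * p 0 * ↑n)]
    exact h4
  have h6 : S < ↑n * ε * (p 0 * p 0) := by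
    have h7 : S / (p 0 * p 0) < ↑n * ε := by
      have := (div_lt_iff₀ hεpos).mp hn
      linarith
    have := (div_lt_iff₀ (show (0:ℝ) < p 0 * p 0 by positivity)).mp h7
    linarith
  nlinarith

/-- If a discrete distribution `(p_k)` on `ℕ` with `p₀ > 0` is infinitely
divisible, then the logarithmic derivative of its generating function
`P(z) = ∑ p_k z^k` has all nonnegative Taylor coefficients at `0`:
`P'(z)/P(z) = ∑ r_k z^k` with `r_k ≥ 0`, for `z ∈ [0,1)`. -/
theorem log_deriv_nonneg_coeffs_of_infDivisible (p : ℕ → ℝ)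
    (hnn : ∀ k, 0 ≤ p k) (hsum : ∑' k, p k = 1) (h0 : 0 < p 0)
    (hID : ∀ n : ℕ, 0 < n → ∃ q : ℕ → ℝ,
      (∀ k, 0 ≤ q k) ∧ (∑' k, q k = 1) ∧ p = seqConvPow q n) :
    ∃ r : ℕ → ℝ, (∀ k, 0 ≤ r k) ∧
      ∀ z ∈ Set.Ico (0 : ℝ) 1,
        deriv (fun w : ℝ => ∑' k, p k * w ^ k) z / (∑' k, p k * z ^ k) =
          ∑' k, r k * z ^ k := by
  have hp0ne : p 0 ≠ 0 := h0.ne'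
  set r := rseq p with hr
  have hrnn : ∀ k, 0 ≤ r k := rseq_nonneg p hnn hsum h0 hID
  have hp_sm : Summable p := by
    by_contra hns
    rw [tsum_eq_zero_of_not_summable hns] at hsum
    norm_num at hsum
  have hp1 : ∀ j, p j ≤ 1 := by
    intro j
    calc p j ≤ ∑' i, p i := Summable.le_tsum hp_sm j fun i _ => hnn i
      _ = 1 := hsum
  -- bound on r
  have hrle : ∀ k, r k ≤ (k + 1) / p 0 := by
    intro k
    have hs := rseq_spec p hp0ne k
    rw [Finset.sum_range_succ] at hs
    simp only [Nat.sub_self] at hs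
    have hrest : 0 ≤ ∑ i ∈ Finset.range k, rseq p i * p (k - i) :=
      Finset.sum_nonneg fun i _ => mul_nonneg (hrnn i) (hnn _)
    have h1 : r k * p 0 ≤ (k + 1) * p (k + 1) := by
      rw [hr]; linarith
    have h2 : (k + 1 : ℝ) * p (k + 1) ≤ (k + 1) := by
      nlinarith [hp1 (k + 1), hnn (k + 1)]
    rw [le_div_iff₀ h0]
    linarith
  refine ⟨r, hrnn, ?_⟩
  rintro z ⟨hz0, hz1⟩
  set b := (z + 1) / 2 with hb
  have hzb : z < b := by rw [hb]; linarith
  have hb1 : b < 1 := by rw [hb]; linarith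
  have hb0 : 0 < b := by rw [hb]; linarith
  have hbn : ‖b‖ < 1 := by rw [Real.norm_eq_abs, abs_of_pos hb0]; exact hb1
  have hzn : ‖z‖ < 1 := by rw [Real.norm_eq_abs, abs_of_nonneg hz0]; exact hz1
  -- summable auxiliary series
  have hgeom : Summable (fun k : ℕ => ((k : ℝ) + 1) * b ^ k) := by
    have A := summable_pow_mul_geometric_of_norm_lt_one (R := ℝ) 1 hbn
    have B : Summable (fun k : ℕ => b ^ k) := summable_geometric_of_lt_one hb0.le hb1
    have := A.add B
    refine this.congr fun n => ?_
    ring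
  have hder_sm : Summable (fun k : ℕ => (k : ℝ) * b ^ (k - 1)) := by
    rw [← summable_nat_add_iff 1]
    refine hgeom.congr fun n => ?_
    simp only [Nat.add_sub_cancel]
    push_cast
    ring
  -- derivative of the power series
  have hderiv : HasDerivAt (fun w : ℝ => ∑' k, p k * w ^ k)
      (∑' k, p k * ((k : ℝ) * z ^ (k - 1))) z := by
    apply hasDerivAt_tsum_of_isPreconnected hder_sm (isOpen_Ioo (a := -b) (b := b))
      (convex_Ioo _ _).isPreconnected
      (g := fun k w => p k * w ^ k) (g' := fun k w => p k * ((k : ℝ) * w ^ (k - 1)))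
      (y₀ := 0)
    · intro n y _
      exact (hasDerivAt_pow n y).const_mul (p n)
    · intro n y hy
      rw [Real.norm_eq_abs, abs_mul, abs_mul, abs_of_nonneg (hnn n),
        abs_of_nonneg (Nat.cast_nonneg (α := ℝ) n), abs_pow]
      have hyb : |y| ≤ b := by
        rw [abs_le]
        rcases hy with ⟨h1, h2⟩
        exact ⟨h1.le, h2.le⟩
      have : |y| ^ (n - 1) ≤ b ^ (n - 1) := pow_le_pow_left₀ (abs_nonneg y) hyb _
      calc p n * ((n : ℝ) * |y| ^ (n - 1)) ≤ 1 * ((n : ℝ) * b ^ (n - 1)) := by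
            apply mul_le_mul (hp1 n) _ _ one_pos.le
            · exact mul_le_mul_of_nonneg_left this (Nat.cast_nonneg n)
            · positivity
        _ = (n : ℝ) * b ^ (n - 1) := one_mul _
    · exact ⟨by linarith, hb0⟩
    · apply Summable.of_nonneg_of_le (fun n => ?_) (fun n => ?_) hp_sm
      · have : (0:ℝ) ≤ (0:ℝ) ^ n := by positivity
        exact mul_nonneg (hnn n) this
      · have : (0:ℝ) ^ n ≤ 1 := by
          rcases Nat.eq_zero_or_pos n with rfl | hn
          · norm_num
          · rw [zero_pow hn.ne']; norm_num
        nlinarith [hnn n, hp1 n]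
    · exact ⟨by linarith, hzb⟩
  -- rewrite the derivative series
  have hder_sm_z : Summable (fun k : ℕ => p k * ((k : ℝ) * z ^ (k - 1))) := by
    apply Summable.of_nonneg_of_le (fun n => ?_) (fun n => ?_) hder_sm
    · exact mul_nonneg (hnn n) (mul_nonneg (Nat.cast_nonneg n) (pow_nonneg hz0 _))
    · have hzp : z ^ (n - 1) ≤ b ^ (n - 1) := pow_le_pow_left₀ hz0 hzb.le _
      have h1 : p n * ((n : ℝ) * z ^ (n - 1)) ≤ (n : ℝ) * z ^ (n - 1) :=
        mul_le_of_le_one_left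
          (mul_nonneg (Nat.cast_nonneg n) (pow_nonneg hz0 _)) (hp1 n)
      have h2 : (n : ℝ) * z ^ (n - 1) ≤ (n : ℝ) * b ^ (n - 1) :=
        mul_le_mul_of_nonneg_left hzp (Nat.cast_nonneg n)
      linarith
  have hshift : (∑' k, p k * ((k : ℝ) * z ^ (k - 1)))
      = ∑' k : ℕ, ((k : ℝ) + 1) * p (k + 1) * z ^ k := by
    rw [Summable.tsum_eq_zero_add hder_sm_z]
    have h00 : p 0 * ((0 : ℕ) : ℝ) * z ^ (0 - 1) = 0 := by norm_num
    simp only [Nat.cast_zero, zero_mul, mul_zero, zero_add]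
    refine tsum_congr fun n => ?_
    simp only [Nat.add_sub_cancel]
    push_cast
    ring
  -- Cauchy product
  have hra : Summable (fun k : ℕ => ‖r k * z ^ k‖) := by
    have hg : Summable (fun k : ℕ => ((k : ℝ) + 1) * z ^ k) := by
      have A := summable_pow_mul_geometric_of_norm_lt_one (R := ℝ) 1 hzn
      have B : Summable (fun k : ℕ => z ^ k) := summable_geometric_of_lt_one hz0 hz1
      refine (A.add B).congr fun n => ?_
      push_cast; ring
    apply Summable.of_nonneg_of_le (fun n => norm_nonneg _) (fun n => ?_) (hg.mul_left (1 / p 0))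
    rw [Real.norm_eq_abs, abs_of_nonneg (mul_nonneg (hrnn n) (pow_nonneg hz0 n))]
    have := hrle n
    have hzp : (0:ℝ) ≤ z ^ n := pow_nonneg hz0 n
    calc r n * z ^ n ≤ ((n : ℝ) + 1) / p 0 * z ^ n := mul_le_mul_of_nonneg_right this hzp
      _ = 1 / p 0 * (((n : ℝ) + 1) * z ^ n) := by ring
  have hpa : Summable (fun k : ℕ => ‖p k * z ^ k‖) := by
    apply Summable.of_nonneg_of_le (fun n => norm_nonneg _) (fun n => ?_) hp_sm
    rw [Real.norm_eq_abs, abs_of_nonneg (mul_nonneg (hnn n) (pow_nonneg hz0 n))]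
    have hzp : z ^ n ≤ 1 := pow_le_one₀ hz0 hz1.le
    nlinarith [hnn n, pow_nonneg hz0 n]
  have hcauchy : ((∑' k, r k * z ^ k) * ∑' k, p k * z ^ k)
      = ∑' n, ∑ k ∈ Finset.range (n + 1), (r k * z ^ k) * (p (n - k) * z ^ (n - k)) :=
    tsum_mul_tsum_eq_tsum_sum_range_of_summable_norm hra hpa
  have hinner : ∀ n : ℕ, ∑ k ∈ Finset.range (n + 1), (r k * z ^ k) * (p (n - k) * z ^ (n - k))
      = ((n : ℝ) + 1) * p (n + 1) * z ^ n := by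
    intro n
    have : ∀ k ∈ Finset.range (n + 1), (r k * z ^ k) * (p (n - k) * z ^ (n - k))
        = (r k * p (n - k)) * z ^ n := by
      intro k hk
      have hkn : k ≤ n := Nat.lt_succ_iff.mp (Finset.mem_range.mp hk)
      have : z ^ k * z ^ (n - k) = z ^ n := by
        rw [← pow_add]
        congr 1
        omega
      calc (r k * z ^ k) * (p (n - k) * z ^ (n - k))
          = (r k * p (n - k)) * (z ^ k * z ^ (n - k)) := by ring
        _ = (r k * p (n - k)) * z ^ n := by rw [this]
    rw [Finset.sum_congr rfl this, ← Finset.sum_mul, rseq_spec p hp0ne n]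
  have hP_pos : 0 < ∑' k, p k * z ^ k := by
    have hsm : Summable (fun k : ℕ => p k * z ^ k) := hpa.of_norm
    have h00 : p 0 * z ^ 0 ≤ ∑' k, p k * z ^ k :=
      Summable.le_tsum hsm 0 fun i _ => mul_nonneg (hnn i) (pow_nonneg hz0 i)
    simp only [pow_zero, mul_one] at h00
    linarith
  have hD : deriv (fun w : ℝ => ∑' k, p k * w ^ k) z
      = (∑' k, r k * z ^ k) * ∑' k, p k * z ^ k := by
    rw [hderiv.deriv, hshift, hcauchy]
    exact tsum_congr fun n => (hinner n).symm
  rw [hD, mul_div_assoc, div_self hP_pos.ne', mul_one]
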